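/- Let X, Y be nonempty sets, f : X → Y, τ a compact topology on Y, and 𝒳 a nonempty family of subsets of X such that the empty set is not a finite intersection of members of 𝒳. Then the attraction set (as)[X;Y;τ;f;𝒳] is nonempty. -/

import Mathlib

open Filter

/-- Attraction set defined via nets. -/
def attrSet {X Y : Type} [TopologicalSpace Y] (f : X → Y) (𝒳 : Set (Set X)) : Set Y :=
  {y | ∃ (D : Type) (r : D → D → Prop) (g : D → X),
    Nonempty D ∧ (∀ d, r d d) ∧ (∀ a b c, r a b → r b c → r a c) ∧
    (∀ a b, ∃ c, r a c ∧ r b c) ∧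
    (∀ A ∈ 𝒳, ∃ d, ∀ e, r d e → g e ∈ A) ∧
    (∀ N ∈ nhds y, ∃ d, ∀ e, r d e → f (g e) ∈ N)}

/-- if `Y` is compact and `𝒳` has the finite intersection
property (no finite intersection of members of `𝒳` is empty), then the
attraction set is nonempty. -/
theorem attrSet_nonempty_of_fip {X Y : Type} [Nonempty X] [Nonempty Y]
    [TopologicalSpace Y] [CompactSpace Y] (f : X → Y) (𝒳 : Set (Set X))
    (hne : 𝒳.Nonempty)
    (hfip : ∀ s : Finset (Set X), s.Nonempty → ↑s ⊆ 𝒳 →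
      ⋂₀ (↑s : Set (Set X)) ≠ (∅ : Set X)) :
    (attrSet f 𝒳).Nonempty := by
  classical
  set F : Filter X := Filter.generate 𝒳 with hF
  have hNB : F.NeBot := by
    constructor
    intro hbot
    have hmem : (∅ : Set X) ∈ F := hbot ▸ Filter.mem_bot
    rw [hF, Filter.mem_generate_iff] at hmem
    obtain ⟨t, hts, htf, hsub⟩ := hmem
    rcases t.eq_empty_or_nonempty with rfl | htne
    · simp at hsub
    · have h1 : (htf.toFinset : Set (Set X)) = t := htf.coe_toFinset
      refine hfip htf.toFinset ?_ ?_ ?_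
      · rw [← Finset.coe_nonempty, h1]; exact htne
      · rw [h1]; exact hts
      · rw [h1]; exact Set.subset_empty_iff.mp hsub
  have : (Filter.map f F).NeBot := Filter.map_neBot
  obtain ⟨y, hy⟩ := exists_clusterPt_of_compactSpace (Filter.map f F)
  have hkey : ∀ s : Finset (Set X), ↑s ⊆ 𝒳 → ∀ N ∈ nhds y,
      ∃ x, x ∈ ⋂₀ (↑s : Set (Set X)) ∧ f x ∈ N := by
    intro s hs N hN
    have hsF : ⋂₀ (↑s : Set (Set X)) ∈ F := by
      rw [hF]
      apply (Filter.sInter_mem s.finite_toSet).mpr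
      intro A hA
      exact Filter.mem_generate_of_mem (hs hA)
    have himg : f '' (⋂₀ (↑s : Set (Set X))) ∈ Filter.map f F :=
      Filter.image_mem_map hsF
    obtain ⟨z, hzN, x, hx, rfl⟩ := (clusterPt_iff_nonempty.mp hy) hN himg
    exact ⟨x, hx, hzN⟩
  -- directed set
  refine ⟨y, {p : Finset (Set X) × Set Y // ↑p.1 ⊆ 𝒳 ∧ p.2 ∈ nhds y},
    fun p q => p.1.1 ⊆ q.1.1 ∧ q.1.2 ⊆ p.1.2,
    fun d => (hkey d.1.1 d.2.1 d.1.2 d.2.2).choose, ?_, ?_, ?_, ?_, ?_, ?_⟩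
  · exact ⟨⟨(∅, Set.univ), by simp⟩⟩
  · exact fun d => ⟨subset_rfl, subset_rfl⟩
  · exact fun a b c hab hbc => ⟨hab.1.trans hbc.1, hbc.2.trans hab.2⟩
  · intro a b
    refine ⟨⟨(a.1.1 ∪ b.1.1, a.1.2 ∩ b.1.2), ?_, ?_⟩, ?_, ?_⟩
    · rw [Finset.coe_union]
      exact Set.union_subset a.2.1 b.2.1
    · exact Filter.inter_mem a.2.2 b.2.2
    · exact ⟨Finset.subset_union_left, Set.inter_subset_left⟩
    · exact ⟨Finset.subset_union_right, Set.inter_subset_right⟩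
  · intro A hA
    refine ⟨⟨({A}, Set.univ), by simpa using hA, univ_mem⟩, ?_⟩
    intro e he
    have := (hkey e.1.1 e.2.1 e.1.2 e.2.2).choose_spec.1
    have hAe : A ∈ e.1.1 := he.1 (Finset.mem_singleton_self A)
    exact this A (Finset.mem_coe.mpr hAe)
  · intro N hN
    refine ⟨⟨(∅, N), by simp, hN⟩, ?_⟩
    intro e he
    have := (hkey e.1.1 e.2.1 e.1.2 e.2.2).choose_spec.2
    exact he.2 this
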